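/- Let (a_n)_{n≥0} be a sequence of nonnegative real numbers, let ρ > 1 and B > 0 be real numbers, and suppose that a_n * n^(5/2) * ρ^(-n) → B as n → ∞. Then the series ∑_{k≥0} a_k ρ^(-k) is summable, and the convolution ratio (∑_{k=0}^{n} a_k * a_{n-k}) / a_n tends to 2 * ∑_{k≥0} a_k ρ^(-k) as n → ∞. -/

import Mathlib

open Filter Topology

/-- Convolution transfer principle: if `a_n ≥ 0` and `a_n · n^(5/2) · ρ^(-n) → B > 0`
with `ρ > 1`, then `∑ a_k ρ^(-k)` is summable and
`(∑_{k=0}^n a_k a_{n-k}) / a_n → 2 · ∑_{k≥0} a_k ρ^(-k)`. -/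
theorem stmt_4 (a : ℕ → ℝ) (ha : ∀ n, 0 ≤ a n) (ρ B : ℝ) (hρ : 1 < ρ) (hB : 0 < B)
    (hasymp :
      Tendsto (fun n : ℕ => a n * (n : ℝ) ^ ((5 : ℝ) / 2) / ρ ^ n) atTop (𝓝 B)) :
    Summable (fun k : ℕ => a k / ρ ^ k) ∧
      Tendsto (fun n : ℕ => (∑ k ∈ Finset.range (n + 1), a k * a (n - k)) / a n) atTop
        (𝓝 (2 * ∑' k : ℕ, a k / ρ ^ k)) := by
  have hρ0 : (0:ℝ) < ρ := lt_trans one_pos hρ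
  have hρn : ∀ n : ℕ, (0:ℝ) < ρ ^ n := fun n => pow_pos hρ0 n
  set b : ℕ → ℝ := fun n => a n / ρ ^ n with hbdef
  have hb0 : ∀ n, 0 ≤ b n := fun n => div_nonneg (ha n) (hρn n).le
  have hφ : Tendsto (fun n : ℕ => b n * (n : ℝ) ^ ((5:ℝ)/2)) atTop (𝓝 B) := by
    refine hasymp.congr fun n => ?_
    simp only [hbdef]
    ring
  -- eventual two-sided bounds on φ
  obtain ⟨N₀, hN₀⟩ : ∃ N, ∀ n ≥ N,
      B/2 < b n * (n:ℝ)^((5:ℝ)/2) ∧ b n * (n:ℝ)^((5:ℝ)/2) < 2*B := by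
    have h1 := hφ.eventually (eventually_gt_nhds (by linarith : B/2 < B))
    have h2 := hφ.eventually (eventually_lt_nhds (by linarith : B < 2*B))
    exact eventually_atTop.mp (h1.and h2)
  set N := max N₀ 1 with hNdef
  have hN1 : 1 ≤ N := le_max_right _ _
  have hN : ∀ n, N ≤ n →
      B/2 < b n * (n:ℝ)^((5:ℝ)/2) ∧ b n * (n:ℝ)^((5:ℝ)/2) < 2*B :=
    fun n hn => hN₀ n (le_trans (le_max_left _ _) hn)
  have hnposR : ∀ n : ℕ, N ≤ n → (0:ℝ) < (n:ℝ) := by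
    intro n hn
    exact_mod_cast lt_of_lt_of_le Nat.zero_lt_one (le_trans hN1 hn)
  have hnpos : ∀ n : ℕ, N ≤ n → (0:ℝ) < (n:ℝ)^((5:ℝ)/2) :=
    fun n hn => Real.rpow_pos_of_pos (hnposR n hn) _
  have hbpos : ∀ n, N ≤ n → 0 < b n := by
    intro n hn
    have h := (hN n hn).1
    have hp := hnpos n hn
    nlinarith [hb0 n, hB]
  have hub : ∀ n, N ≤ n → b n ≤ 2*B / (n:ℝ)^((5:ℝ)/2) := by
    intro n hn
    rw [le_div_iff₀ (hnpos n hn)]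
    exact (hN n hn).2.le
  have hlb : ∀ n, N ≤ n → B/2/(n:ℝ)^((5:ℝ)/2) ≤ b n := by
    intro n hn
    rw [div_le_iff₀ (hnpos n hn)]
    exact (hN n hn).1.le
  -- summability
  have hsummable : Summable b := by
    have hO : b =O[atTop] fun n : ℕ => (n:ℝ) ^ (-((5:ℝ)/2)) := by
      rw [Asymptotics.isBigO_iff]
      refine ⟨2*B, eventually_atTop.mpr ⟨N, fun n hn => ?_⟩⟩
      have hp := hnpos n hn
      have hinv : (n:ℝ) ^ (-((5:ℝ)/2)) = ((n:ℝ)^((5:ℝ)/2))⁻¹ :=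
        Real.rpow_neg (Nat.cast_nonneg n) _
      rw [Real.norm_of_nonneg (hb0 n), hinv,
        Real.norm_of_nonneg (inv_nonneg.mpr hp.le)]
      calc b n ≤ 2*B/(n:ℝ)^((5:ℝ)/2) := hub n hn
        _ = 2*B * ((n:ℝ)^((5:ℝ)/2))⁻¹ := div_eq_mul_inv _ _
    exact summable_of_isBigO_nat (Real.summable_nat_rpow.2 (by norm_num)) hO
  refine ⟨hsummable, ?_⟩
  -- ratio limit
  have hratio : ∀ k : ℕ, Tendsto (fun n => b (n - k) / b n) atTop (𝓝 1) := by
    intro k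
    have h1 : Tendsto (fun n : ℕ => b (n-k) * ((n-k : ℕ):ℝ)^((5:ℝ)/2)) atTop (𝓝 B) :=
      hφ.comp (tendsto_sub_atTop_nat k)
    have h2 : Tendsto
        (fun n : ℕ => (b (n-k) * ((n-k:ℕ):ℝ)^((5:ℝ)/2)) / (b n * (n:ℝ)^((5:ℝ)/2)))
        atTop (𝓝 1) := by
      have := h1.div hφ hB.ne'
      rwa [div_self hB.ne'] at this
    have hdreal : Tendsto (fun x : ℝ => x / (x - (k:ℝ))) atTop (𝓝 1) := by
      have ht : Tendsto (fun x : ℝ => x - (k:ℝ)) atTop atTop := by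
        simpa [sub_eq_add_neg] using tendsto_atTop_add_const_right atTop (-(k:ℝ)) tendsto_id
      have hk0 : Tendsto (fun x : ℝ => (k:ℝ)/(x - (k:ℝ))) atTop (𝓝 0) :=
        Tendsto.div_atTop tendsto_const_nhds ht
      have hsum : Tendsto (fun x : ℝ => 1 + (k:ℝ)/(x - (k:ℝ))) atTop (𝓝 (1+0)) :=
        tendsto_const_nhds.add hk0
      rw [add_zero] at hsum
      refine hsum.congr' ?_
      filter_upwards [eventually_ge_atTop ((k:ℝ)+1)] with x hx
      have hne : x - (k:ℝ) ≠ 0 := by linarith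
      field_simp
      ring
    have hd : Tendsto (fun n : ℕ => (n:ℝ)/((n-k:ℕ):ℝ)) atTop (𝓝 1) := by
      have := hdreal.comp tendsto_natCast_atTop_atTop (α := ℕ)
      refine this.congr' ?_
      filter_upwards [eventually_ge_atTop k] with n hn
      simp only [Function.comp]
      rw [Nat.cast_sub hn]
    have h3 : Tendsto (fun n : ℕ => ((n:ℝ)/((n-k:ℕ):ℝ))^((5:ℝ)/2)) atTop (𝓝 1) := by
      have := hd.rpow_const (p := (5:ℝ)/2) (Or.inl one_ne_zero)
      rwa [Real.one_rpow] at this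
    have hmul := h2.mul h3
    rw [mul_one] at hmul
    refine hmul.congr' ?_
    filter_upwards [eventually_ge_atTop (N + k)] with n hn
    have hmN : N ≤ n - k := by omega
    have hnN : N ≤ n := by omega
    have hpm : (0:ℝ) < ((n-k:ℕ):ℝ)^((5:ℝ)/2) := hnpos _ hmN
    have hpn : (0:ℝ) < (n:ℝ)^((5:ℝ)/2) := hnpos _ hnN
    have hbn : b n ≠ 0 := (hbpos n hnN).ne'
    rw [Real.div_rpow (Nat.cast_nonneg n) (Nat.cast_nonneg (n-k))]
    field_simp
  -- dominated convergence bound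
  have hBnd : ∀ᶠ n in atTop, ∀ k,
      ‖if 2*k ≤ n then b k * b (n-k) / b n else 0‖ ≤ 32 * b k := by
    filter_upwards [eventually_ge_atTop (2*N)] with n hn k
    by_cases hk : 2*k ≤ n
    · rw [if_pos hk]
      have hmN : N ≤ n - k := by omega
      have hnN : N ≤ n := by omega
      have hbnpos := hbpos n hnN
      have hnonneg : 0 ≤ b k * b (n-k) / b n :=
        div_nonneg (mul_nonneg (hb0 k) (hb0 _)) (hb0 n)
      rw [Real.norm_of_nonneg hnonneg, mul_div_assoc, mul_comm (32:ℝ) (b k)]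
      refine mul_le_mul_of_nonneg_left ?_ (hb0 k)
      -- b (n-k) / b n ≤ 32
      have hpm : (0:ℝ) < ((n-k:ℕ):ℝ)^((5:ℝ)/2) := hnpos _ hmN
      have hpn : (0:ℝ) < (n:ℝ)^((5:ℝ)/2) := hnpos _ hnN
      have h1 : b (n-k) ≤ 2*B/((n-k:ℕ):ℝ)^((5:ℝ)/2) := hub _ hmN
      have h2 : B/2/(n:ℝ)^((5:ℝ)/2) ≤ b n := hlb _ hnN
      have hd2 : (0:ℝ) < B/2/(n:ℝ)^((5:ℝ)/2) := div_pos (by linarith) hpn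
      have key : (n:ℝ)^((5:ℝ)/2) ≤ 8 * ((n-k:ℕ):ℝ)^((5:ℝ)/2) := by
        have hle : (n:ℝ) ≤ 2 * ((n-k:ℕ):ℝ) := by
          have : n ≤ 2 * (n - k) := by omega
          exact_mod_cast this
        calc (n:ℝ)^((5:ℝ)/2) ≤ (2 * ((n-k:ℕ):ℝ))^((5:ℝ)/2) :=
              Real.rpow_le_rpow (Nat.cast_nonneg n) hle (by norm_num)
          _ = (2:ℝ)^((5:ℝ)/2) * ((n-k:ℕ):ℝ)^((5:ℝ)/2) :=
              Real.mul_rpow (by norm_num) (Nat.cast_nonneg _)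
          _ ≤ 8 * ((n-k:ℕ):ℝ)^((5:ℝ)/2) := by
              refine mul_le_mul_of_nonneg_right ?_ hpm.le
              calc (2:ℝ)^((5:ℝ)/2) ≤ (2:ℝ)^(3:ℝ) :=
                    Real.rpow_le_rpow_of_exponent_le (by norm_num) (by norm_num)
                _ = 8 := by
                    rw [show (3:ℝ) = ((3:ℕ):ℝ) by norm_num, Real.rpow_natCast]
                    norm_num
      calc b (n-k) / b n
          ≤ (2*B/((n-k:ℕ):ℝ)^((5:ℝ)/2)) / (B/2/(n:ℝ)^((5:ℝ)/2)) :=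
            div_le_div₀ (div_nonneg (by linarith) hpm.le) h1 hd2 h2
        _ = 4 * ((n:ℝ)^((5:ℝ)/2) / ((n-k:ℕ):ℝ)^((5:ℝ)/2)) := by
            field_simp
            ring
        _ ≤ 32 := by
            rw [mul_div_assoc']
            rw [div_le_iff₀ hpm]
            linarith
    · rw [if_neg hk, norm_zero]
      have := hb0 k
      positivity
  have hBnd' : ∀ᶠ n in atTop, ∀ k,
      ‖if 2*k < n then b k * b (n-k) / b n else 0‖ ≤ 32 * b k := by
    filter_upwards [hBnd] with n hn k
    by_cases hk : 2*k < n
    · rw [if_pos hk]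
      have := hn k
      rwa [if_pos (le_of_lt hk)] at this
    · rw [if_neg hk, norm_zero]
      have := hb0 k
      positivity
  -- pointwise limits
  have hpt : ∀ k, Tendsto (fun n => if 2*k ≤ n then b k * b (n-k) / b n else 0)
      atTop (𝓝 (b k)) := by
    intro k
    have h := (tendsto_const_nhds (x := b k) (f := atTop (α := ℕ))).mul (hratio k)
    rw [mul_one] at h
    refine (h.congr' ?_ : Tendsto _ atTop (𝓝 (b k)))
    filter_upwards [eventually_ge_atTop (2*k)] with n hn
    rw [if_pos hn, mul_div_assoc]
  have hpt' : ∀ k, Tendsto (fun n => if 2*k < n then b k * b (n-k) / b n else 0)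
      atTop (𝓝 (b k)) := by
    intro k
    have h := (tendsto_const_nhds (x := b k) (f := atTop (α := ℕ))).mul (hratio k)
    rw [mul_one] at h
    refine (h.congr' ?_ : Tendsto _ atTop (𝓝 (b k)))
    filter_upwards [eventually_gt_atTop (2*k)] with n hn
    rw [if_pos hn, mul_div_assoc]
  have hT1 : Tendsto (fun n => ∑' k, if 2*k ≤ n then b k * b (n-k) / b n else 0)
      atTop (𝓝 (∑' k, b k)) :=
    tendsto_tsum_of_dominated_convergence (hsummable.mul_left 32) hpt hBnd
  have hT2 : Tendsto (fun n => ∑' k, if 2*k < n then b k * b (n-k) / b n else 0)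
      atTop (𝓝 (∑' k, b k)) :=
    tendsto_tsum_of_dominated_convergence (hsummable.mul_left 32) hpt' hBnd'
  -- tsum = finite sum
  have e1 : ∀ n : ℕ, (∑' k, if 2*k ≤ n then b k * b (n-k) / b n else 0)
      = ∑ k ∈ Finset.range (n+1), (if 2*k ≤ n then b k * b (n-k) / b n else 0) := by
    intro n
    refine tsum_eq_sum fun k hk => ?_
    rw [Finset.mem_range] at hk
    exact if_neg (by omega)
  have e2 : ∀ n : ℕ, (∑' k, if 2*k < n then b k * b (n-k) / b n else 0)
      = ∑ k ∈ Finset.range (n+1), (if 2*k < n then b k * b (n-k) / b n else 0) := by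
    intro n
    refine tsum_eq_sum fun k hk => ?_
    rw [Finset.mem_range] at hk
    exact if_neg (by omega)
  -- symmetry splitting
  have hsplit : ∀ n : ℕ,
      ∑ k ∈ Finset.range (n+1), b k * b (n-k) / b n
      = (∑ k ∈ Finset.range (n+1), (if 2*k ≤ n then b k * b (n-k) / b n else 0))
        + ∑ k ∈ Finset.range (n+1), (if 2*k < n then b k * b (n-k) / b n else 0) := by
    intro n
    rw [← Finset.sum_filter, ← Finset.sum_filter,
      ← Finset.sum_filter_add_sum_filter_not (Finset.range (n+1)) (fun k => 2*k ≤ n)]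
    congr 1
    refine Finset.sum_bij' (fun k _ => n - k) (fun k _ => n - k) ?_ ?_ ?_ ?_ ?_
    · intro k hk
      simp only [Finset.mem_filter, Finset.mem_range, not_le] at hk ⊢
      omega
    · intro k hk
      simp only [Finset.mem_filter, Finset.mem_range, not_le] at hk ⊢
      omega
    · intro k hk
      simp only [Finset.mem_filter, Finset.mem_range, not_le] at hk
      show n - (n - k) = k
      omega
    · intro k hk
      simp only [Finset.mem_filter, Finset.mem_range, not_le] at hk
      show n - (n - k) = k
      omega
    · intro k hk
      simp only [Finset.mem_filter, Finset.mem_range, not_le] at hk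
      rw [Nat.sub_sub_self (by omega : k ≤ n), mul_comm (b k)]
  -- rewrite the target quotient
  have heq : ∀ n : ℕ,
      (∑ k ∈ Finset.range (n + 1), a k * a (n - k)) / a n
      = ∑ k ∈ Finset.range (n+1), b k * b (n-k) / b n := by
    intro n
    have ha_eq : ∀ m, a m = b m * ρ ^ m := fun m =>
      (div_mul_cancel₀ (a m) (hρn m).ne').symm
    have hsum_eq : ∑ k ∈ Finset.range (n + 1), a k * a (n - k)
        = (∑ k ∈ Finset.range (n+1), b k * b (n-k)) * ρ ^ n := by
      rw [Finset.sum_mul]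
      refine Finset.sum_congr rfl fun k hk => ?_
      rw [Finset.mem_range] at hk
      rw [ha_eq k, ha_eq (n-k)]
      rw [show b k * ρ ^ k * (b (n-k) * ρ ^ (n-k)) = b k * b (n-k) * (ρ ^ k * ρ ^ (n-k))
        by ring, ← pow_add, show k + (n - k) = n by omega]
    rw [hsum_eq, ha_eq n, mul_div_mul_right _ _ (hρn n).ne', Finset.sum_div]
  -- assemble
  have hfinal := hT1.add hT2
  rw [two_mul]
  refine hfinal.congr fun n => ?_
  rw [heq n, hsplit n, e1 n, e2 n]
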